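/- Let V be a surjective and orthogonal preserving m-ordered PSO on S. Then there exists a permutation π of ℕ such that P_{i_1...i_m,k} = 0 whenever π(k) ∉ {i_1,...,i_m}, and V(e_{π(k)}) = e_k for all k. -/
import Mathlib


/-- The m-ordered polynomial operator associated to a hypermatrix `P`. -/
noncomputable def psoV (m : ℕ) (P : (Fin m → ℕ) → ℕ → ℝ) (x : ℕ → ℝ) (k : ℕ) : ℝ :=
  ∑' i : Fin m → ℕ, P i k * ∏ j, x (i j)

/-- The hypermatrix is stochastic. -/
def IsStochastic (m : ℕ) (P : (Fin m → ℕ) → ℕ → ℝ) : Prop :=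
  (∀ i k, 0 ≤ P i k) ∧ ∀ i, HasSum (fun k => P i k) 1

/-- symmetry of the hypermatrix in its first m indices. -/
def HypSymm (m : ℕ) (P : (Fin m → ℕ) → ℕ → ℝ) : Prop :=
  ∀ (σ : Equiv.Perm (Fin m)) (i : Fin m → ℕ) (k : ℕ), P (i ∘ σ) k = P i k

/-- membership in the infinite-dimensional simplex S. -/
def inS (x : ℕ → ℝ) : Prop := (∀ i, 0 ≤ x i) ∧ HasSum x 1

/-- the standard basis vector e_i. -/
def stdBasis (i : ℕ) : ℕ → ℝ := fun n => if n = i then 1 else 0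

/-- x and y are orthogonal: disjoint supports. -/
def Orth (x y : ℕ → ℝ) : Prop := ∀ k, x k * y k = 0

/-- V is orthogonal preserving on S. -/
def IsOP (m : ℕ) (P : (Fin m → ℕ) → ℕ → ℝ) : Prop :=
  ∀ x y : ℕ → ℝ, inS x → inS y → Orth x y → Orth (psoV m P x) (psoV m P y)

/-- V is surjective on S. -/
def SurjOnS (m : ℕ) (P : (Fin m → ℕ) → ℕ → ℝ) : Prop :=
  ∀ y : ℕ → ℝ, inS y → ∃ x : ℕ → ℝ, inS x ∧ psoV m P x = y

section Aux

variable {m : ℕ} {P : (Fin m → ℕ) → ℕ → ℝ}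

lemma psoV_stdBasis (a k : ℕ) : psoV m P (stdBasis a) k = P (fun _ => a) k := by
  unfold psoV
  rw [tsum_eq_single (fun _ : Fin m => a)]
  · simp [stdBasis]
  · intro i hi
    have hj : ∃ j, i j ≠ a := by
      by_contra h
      push_neg at h
      exact hi (funext h)
    obtain ⟨j, hj⟩ := hj
    have hz : stdBasis a (i j) = 0 := if_neg hj
    rw [Finset.prod_eq_zero (Finset.mem_univ j) hz, mul_zero]

lemma inS_stdBasis (a : ℕ) : inS (stdBasis a) := by
  constructor
  · intro n
    unfold stdBasis
    split <;> norm_num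
  · unfold stdBasis
    exact hasSum_ite_eq a 1

lemma exists_pos {x : ℕ → ℝ} (hx : inS x) : ∃ a, 0 < x a := by
  by_contra h
  push_neg at h
  have hx0 : x = 0 := funext fun a => le_antisymm (h a) (hx.1 a)
  rw [hx0] at hx
  exact one_ne_zero (hx.2.unique hasSum_zero)

set_option maxHeartbeats 1000000 in
lemma hasSum_pi_prod (x : ℕ → ℝ) (hx : inS x) (n : ℕ) :
    HasSum (fun i : Fin n → ℕ => ∏ j, x (i j)) 1 := by
  induction n with
  | zero =>
    simpa using hasSum_fintype (fun i : Fin 0 → ℕ => ∏ j, x (i j))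
  | succ n ih =>
    have hnn : ∀ p : Fin n → ℕ, 0 ≤ ∏ j, x (p j) :=
      fun p => Finset.prod_nonneg fun j _ => hx.1 _
    have hmul : Summable (fun p : ℕ × (Fin n → ℕ) => x p.1 * ∏ j, x (p.2 j)) :=
      Summable.mul_of_nonneg (f := x) (g := fun i : Fin n → ℕ => ∏ j, x (i j))
        hx.2.summable ih.summable hx.1 hnn
    have h1 : HasSum (fun p : ℕ × (Fin n → ℕ) => x p.1 * ∏ j, x (p.2 j)) 1 := by
      have heq := HasSum.mul_eq hx.2 ih hmul.hasSum
      rw [one_mul] at heq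
      exact heq ▸ hmul.hasSum
    refine (Equiv.hasSum_iff (Fin.consEquiv fun _ => ℕ)).mp ?_
    have hcomp : ((fun i : Fin (n + 1) → ℕ => ∏ j, x (i j)) ∘ (Fin.consEquiv fun _ => ℕ)) =
        fun p : ℕ × (Fin n → ℕ) => x p.1 * ∏ j, x (p.2 j) := by
      funext p
      simp [Fin.consEquiv, Fin.prod_univ_succ]
    rw [hcomp]
    exact h1

lemma summable_term (hP : IsStochastic m P) {x : ℕ → ℝ} (hx : inS x) (k : ℕ) :
    Summable (fun i : Fin m → ℕ => P i k * ∏ j, x (i j)) := by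
  refine Summable.of_nonneg_of_le
    (fun i => mul_nonneg (hP.1 i k) (Finset.prod_nonneg fun j _ => hx.1 _))
    (fun i => ?_) (hasSum_pi_prod x hx m).summable
  have hle1 : P i k ≤ 1 := le_hasSum (hP.2 i) k fun j _ => hP.1 i j
  exact mul_le_of_le_one_left (Finset.prod_nonneg fun j _ => hx.1 _) hle1

lemma term_eq_zero (hP : IsStochastic m P) {x : ℕ → ℝ} (hx : inS x) {k : ℕ}
    (h0 : psoV m P x k = 0) (i : Fin m → ℕ) : P i k * ∏ j, x (i j) = 0 := by
  have hs := summable_term hP hx k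
  have hle : P i k * ∏ j, x (i j) ≤ psoV m P x k :=
    Summable.le_tsum hs i fun j _ => mul_nonneg (hP.1 j k) (Finset.prod_nonneg fun l _ => hx.1 _)
  have hge : 0 ≤ P i k * ∏ j, x (i j) :=
    mul_nonneg (hP.1 i k) (Finset.prod_nonneg fun l _ => hx.1 _)
  linarith [hle, hge, h0.le, h0.ge]

end Aux

theorem stmt14 (m : ℕ) (hm : 1 ≤ m) (P : (Fin m → ℕ) → ℕ → ℝ)
    (hP : IsStochastic m P) (hsym : HypSymm m P)
    (hsur : SurjOnS m P) (hop : IsOP m P) :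
    ∃ π : Equiv.Perm ℕ,
      (∀ (i : Fin m → ℕ) (k : ℕ), (∀ j, i j ≠ π k) → P i k = 0) ∧
      ∀ k : ℕ, psoV m P (stdBasis (π k)) = stdBasis k := by
  classical
  -- Step 1: for each k there is a with V(e_a) = e_k
  have key : ∀ k, ∃ a, psoV m P (stdBasis a) = stdBasis k := by
    intro k
    obtain ⟨x, hx, hVx⟩ := hsur (stdBasis k) (inS_stdBasis k)
    obtain ⟨a, ha⟩ := exists_pos hx
    refine ⟨a, ?_⟩
    have hz : ∀ j, j ≠ k → P (fun _ => a) j = 0 := by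
      intro j hj
      have h0 : psoV m P x j = 0 := by
        rw [hVx]
        exact if_neg hj
      have ht := term_eq_zero hP hx h0 (fun _ => a)
      have hprod : (∏ _l : Fin m, x a) = x a ^ m := by
        simp
      rw [hprod] at ht
      have hpow : (0 : ℝ) < x a ^ m := pow_pos ha m
      rcases mul_eq_zero.mp ht with h | h
      · exact h
      · exact absurd h (ne_of_gt hpow)
    -- the row sums to 1 and vanishes off k, hence equals stdBasis k
    have hrow : HasSum (fun j => P (fun _ => a) j) 1 := hP.2 _
    have hone : P (fun _ => a) k = 1 := by
      have heqf : (fun j => P (fun _ => a) j) =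
          fun j => if j = k then P (fun _ => a) k else 0 := by
        funext j
        by_cases hjk : j = k
        · subst hjk; simp
        · simp [hjk, hz j hjk]
      rw [heqf] at hrow
      exact (HasSum.unique (hasSum_ite_eq k _) hrow)
    funext j
    rw [psoV_stdBasis]
    by_cases hjk : j = k
    · subst hjk
      simp [stdBasis, hone]
    · simp [stdBasis, hjk, hz j hjk]
  choose a ha using key
  have hinj : Function.Injective a := by
    intro k k' h
    have h2 : stdBasis k = stdBasis k' := by rw [← ha k, ← ha k', h]
    have h3 := congrFun h2 k
    by_contra hne
    simp [stdBasis, hne] at h3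
  have hsurj : Function.Surjective a := by
    intro b
    by_contra hb
    push_neg at hb
    have h0 : ∀ k, psoV m P (stdBasis b) k = 0 := by
      intro k
      have horth : Orth (stdBasis b) (stdBasis (a k)) := by
        intro n
        by_cases hn : n = b
        · have : stdBasis (a k) n = 0 := by
            rw [hn]; exact if_neg fun h => hb k h.symm
          rw [this, mul_zero]
        · have : stdBasis b n = 0 := if_neg hn
          rw [this, zero_mul]
      have hOP := hop _ _ (inS_stdBasis b) (inS_stdBasis (a k)) horth k
      rw [ha k] at hOP
      simpa [stdBasis] using hOP
    have h1 : HasSum (fun k => psoV m P (stdBasis b) k) 1 := by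
      have heq : (fun k => psoV m P (stdBasis b) k) = fun k => P (fun _ => b) k :=
        funext (psoV_stdBasis b)
      rw [heq]
      exact hP.2 _
    rw [show (fun k => psoV m P (stdBasis b) k) = fun _ => (0 : ℝ) from funext h0] at h1
    exact one_ne_zero (h1.unique hasSum_zero)
  refine ⟨Equiv.ofBijective a ⟨hinj, hsurj⟩, ?_, fun k => ha k⟩
  intro i k hi
  have hi' : ∀ j, i j ≠ a k := hi
  set T : Finset ℕ := Finset.image i Finset.univ with hT
  have hTne : (i ⟨0, hm⟩) ∈ T := Finset.mem_image_of_mem i (Finset.mem_univ _)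
  have hTcard : 0 < T.card := Finset.card_pos.mpr ⟨_, hTne⟩
  set c : ℝ := (T.card : ℝ)⁻¹ with hc
  have hcpos : 0 < c := inv_pos.mpr (Nat.cast_pos.mpr hTcard)
  set x : ℕ → ℝ := fun n => if n ∈ T then c else 0 with hxdef
  have hx : inS x := by
    constructor
    · intro n
      simp only [hxdef]
      split
      · exact hcpos.le
      · exact le_refl 0
    · have hsum : HasSum x (∑ b ∈ T, x b) :=
        hasSum_sum_of_ne_finset_zero fun b hb => if_neg hb
      have hsval : (∑ b ∈ T, x b) = 1 := by
        have : (∑ b ∈ T, x b) = ∑ _b ∈ T, c :=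
          Finset.sum_congr rfl fun b hb => if_pos hb
        rw [this, Finset.sum_const, nsmul_eq_mul, hc,
          mul_inv_cancel₀ (Nat.cast_ne_zero.mpr hTcard.ne')]
      rwa [hsval] at hsum
  have hak : a k ∉ T := by
    simp only [hT, Finset.mem_image]
    rintro ⟨j, -, hj⟩
    exact hi' j hj
  have horth : Orth x (stdBasis (a k)) := by
    intro n
    by_cases hn : n = a k
    · subst hn
      have : x (a k) = 0 := if_neg hak
      rw [this, zero_mul]
    · have : stdBasis (a k) n = 0 := if_neg hn
      rw [this, mul_zero]
  have hOP := hop _ _ hx (inS_stdBasis (a k)) horth k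
  rw [ha k] at hOP
  have h0 : psoV m P x k = 0 := by
    simpa [stdBasis] using hOP
  have ht := term_eq_zero hP hx h0 i
  have hprod : (∏ j, x (i j)) = c ^ m := by
    have : ∀ j : Fin m, x (i j) = c :=
      fun j => if_pos (Finset.mem_image_of_mem i (Finset.mem_univ j))
    rw [Finset.prod_congr rfl fun j _ => this j]
    simp
  rw [hprod] at ht
  rcases mul_eq_zero.mp ht with h | h
  · exact h
  · exact absurd h (ne_of_gt (pow_pos hcpos m))
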